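/- Let D be a linear code over F_Q and q a power dividing Q such that F_q ⊆ F_Q, and let C = D ∩ F_q^n be the subfield-subcode. Then C⊥ = Tr(D⊥), where Tr is the coordinatewise trace map of the extension F_Q/F_q and the first dual is taken over F_q while D⊥ is taken over F_Q (Delsarte's theorem). -/

import Mathlib

open LinearMap

/-- Dot-product bilinear form. -/
noncomputable def dotForm (R : Type*) [CommRing R] (n : ℕ) :
    LinearMap.BilinForm R (Fin n → R) :=
  LinearMap.mk₂ R (fun x y => ∑ j, x j * y j)
    (by intro x x' y; simp [add_mul, Finset.sum_add_distrib])
    (by intro a x y; simp [Finset.mul_sum, mul_assoc])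
    (by intro x y y'; simp [mul_add, Finset.sum_add_distrib])
    (by intro a x y; simp [Finset.mul_sum]; congr 1; ext j; ring)

lemma dotForm_apply (R : Type*) [CommRing R] (n : ℕ) (x y : Fin n → R) :
    dotForm R n x y = ∑ j, x j * y j := rfl

lemma dotForm_isRefl (R : Type*) [CommRing R] (n : ℕ) : (dotForm R n).IsRefl := by
  intro x y h
  simpa [dotForm_apply, mul_comm] using h

lemma dotForm_nondeg (R : Type*) [Field R] (n : ℕ) : (dotForm R n).Nondegenerate := by
  refine (LinearMap.IsRefl.nondegenerate_iff_separatingLeft (dotForm_isRefl R n)).mpr ?_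
  intro x hx
  funext i
  have := hx (Pi.single i 1)
  simp only [dotForm_apply] at this
  classical
  rw [Finset.sum_eq_single i (by intro b _ hb; simp [Pi.single_eq_of_ne hb])
    (by simp)] at this
  simpa using this

theorem stmt12 {F K : Type*} [Field F] [Field K] [Algebra F K] [Fintype F] [Fintype K]
    {n : ℕ} (D : Submodule K (Fin n → K)) :
    {y : Fin n → F | ∀ x : Fin n → F, (fun j => algebraMap F K (x j)) ∈ D →
        ∑ j, x j * y j = 0} =
      (fun w : Fin n → K => fun j => Algebra.trace F K (w j)) ''
        {w : Fin n → K | ∀ x ∈ D, ∑ j, x j * w j = 0} := by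
  classical
  have _inst : Module.Finite F K := Module.Finite.of_finite
  set BF := dotForm F n
  set BK := dotForm K n
  set C : Submodule F (Fin n → F) :=
    (D.restrictScalars F).comap ((Algebra.linearMap F K).compLeft (Fin n)) with hC
  set T : Submodule F (Fin n → F) :=
    ((BK.orthogonal D).restrictScalars F).map
      ((Algebra.trace F K).compLeft (Fin n)) with hT
  -- trace-compatibility of the two dot products
  have key : ∀ (w : Fin n → K) (x : Fin n → F),
      (∑ j, Algebra.trace F K (w j) * x j)
        = Algebra.trace F K (∑ j, w j * algebraMap F K (x j)) := by
    intro w x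
    rw [map_sum]
    refine Finset.sum_congr rfl fun j _ => ?_
    rw [show w j * algebraMap F K (x j) = x j • w j by
      simp [Algebra.smul_def, mul_comm], map_smul]
    simp [smul_eq_mul, mul_comm]
  -- RHS set equals ↑T
  have hRHS : (fun w : Fin n → K => fun j => Algebra.trace F K (w j)) ''
      {w : Fin n → K | ∀ x ∈ D, ∑ j, x j * w j = 0} = (T : Set (Fin n → F)) := by
    have hset : {w : Fin n → K | ∀ x ∈ D, ∑ j, x j * w j = 0}
        = (BK.orthogonal D : Set (Fin n → K)) := by
      ext w
      simp only [Set.mem_setOf_eq, SetLike.mem_coe,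
        LinearMap.BilinForm.mem_orthogonal_iff]
      exact ⟨fun h x hx => h x hx, fun h x hx => h x hx⟩
    rw [hset, hT]
    rfl
  -- LHS set equals orthogonal of C
  have hLHS : {y : Fin n → F | ∀ x : Fin n → F, (fun j => algebraMap F K (x j)) ∈ D →
      ∑ j, x j * y j = 0} = (BF.orthogonal C : Set (Fin n → F)) := by
    ext y
    rw [Set.mem_setOf_eq, SetLike.mem_coe, LinearMap.BilinForm.mem_orthogonal_iff]
    exact ⟨fun h x hx => h x hx, fun h x hx => h x hx⟩
  -- key step: BF.orthogonal T = C
  have hkey : BF.orthogonal T = C := by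
    ext x
    constructor
    · intro hx
      have hDD : BK.orthogonal (BK.orthogonal D) = D :=
        LinearMap.BilinForm.orthogonal_orthogonal (dotForm_nondeg K n) (dotForm_isRefl K n) D
      simp only [hC, Submodule.mem_comap, Submodule.restrictScalars_mem]
      have : ((Algebra.linearMap F K).compLeft (Fin n)) x ∈ D := by
        rw [← hDD, LinearMap.BilinForm.mem_orthogonal_iff]
        intro w hw
        show (∑ j, w j * algebraMap F K (x j)) = 0
        by_contra hc
        set c : K := ∑ j, w j * algebraMap F K (x j) with hcdef
        obtain ⟨z, hz⟩ := Algebra.trace_surjective F K 1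
        have hz1 : Algebra.trace F K z ≠ 0 := by rw [hz]; exact one_ne_zero
        have hkw : (z * c⁻¹) • w ∈ BK.orthogonal D := Submodule.smul_mem _ _ hw
        have hmem : (fun j => Algebra.trace F K (((z * c⁻¹) • w) j)) ∈ T := by
          rw [hT]; exact ⟨(z * c⁻¹) • w, hkw, rfl⟩
        have h0 : (∑ j, Algebra.trace F K (((z * c⁻¹) • w) j) * x j) = 0 := hx _ hmem
        rw [key] at h0
        have hsum : (∑ j, ((z * c⁻¹) • w) j * algebraMap F K (x j)) = (z * c⁻¹) * c := by
          rw [hcdef, Finset.mul_sum]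
          exact Finset.sum_congr rfl fun j _ => by simp [smul_eq_mul, mul_assoc]
        rw [hsum, mul_assoc, inv_mul_cancel₀ hc, mul_one] at h0
        exact hz1 h0
      exact this
    · intro hx
      simp only [hC, Submodule.mem_comap, Submodule.restrictScalars_mem] at hx
      rw [LinearMap.BilinForm.mem_orthogonal_iff]
      rintro t ⟨w, hw, rfl⟩
      have hw0 : (∑ j, w j * algebraMap F K (x j)) = 0 := by
        have h1 : (∑ j, (fun j => algebraMap F K (x j)) j * w j) = 0 := hw _ hx
        rw [← h1]
        exact Finset.sum_congr rfl fun j _ => mul_comm _ _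
      show (∑ j, Algebra.trace F K (w j) * x j) = 0
      rw [key, hw0, map_zero]
  rw [hLHS, hRHS, ← hkey,
    LinearMap.BilinForm.orthogonal_orthogonal (dotForm_nondeg F n) (dotForm_isRefl F n) T]
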